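/- Let C be a binary code, G its reduced basis w.r.t. <_e with the variables ordered x_1 ≺ … ≺ x_n, and σ ∈ S_n. Then σ(G) is a reduced basis for the code σ(C) with respect to the error-vector ordering built from the admissible ordering in which x_{σ(1)} ≺ … ≺ x_{σ(n)}; in particular the set of canonical forms for σ(C) under this ordering is σ(N). -/

import Mathlib

/-- `[X]` is the free commutative monoid on `x_1, …, x_n`. -/
abbrev BWord (n : ℕ) := Multiset (Fin n)

/-- The set of indices of variables dividing `w`. -/
def Ind {n : ℕ} (w : BWord n) : Finset (Fin n) := w.toFinset

/-- The error-vector ordering `<_e` built from an admissible ordering `prec`. -/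
def ltE {n : ℕ} (prec : BWord n → BWord n → Prop) (u w : BWord n) : Prop :=
  (Ind u).card < (Ind w).card ∨ ((Ind u).card = (Ind w).card ∧ prec u w)

/-- `ψ : [X] → F_2^n`. -/
def psi {n : ℕ} (w : BWord n) : Fin n → ZMod 2 := fun i => (w.count i : ZMod 2)

/-- Action of `S_n` on binary words (permuting variable indices). -/
def permBW {n : ℕ} (σ : Equiv.Perm (Fin n)) (w : BWord n) : BWord n := w.map σ

/-- Action of `S_n` on `F_2^n` as a linear map: `(σ·y)_i = y_{σ⁻¹ i}`. -/
def permLin {n : ℕ} (σ : Equiv.Perm (Fin n)) :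
    (Fin n → ZMod 2) →ₗ[ZMod 2] (Fin n → ZMod 2) :=
  LinearMap.funLeft (ZMod 2) (ZMod 2) fun i => σ⁻¹ i

/-- The set `B(C)` of binomials, as pairs (leading term, lower term). -/
def BC {n : ℕ} (lt : BWord n → BWord n → Prop)
    (C : Submodule (ZMod 2) (Fin n → ZMod 2)) (N : Set (BWord n)) :
    Set (BWord n × BWord n) :=
  {g | ∃ w ∈ N, ∃ w' ∈ N, ∃ x : Fin n,
    g = (w + {x}, w') ∧ w + {x} ≠ w' ∧ psi (w + {x}) - psi w' ∈ C ∧ lt w' (w + {x})}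

/-- `G` is the reduced basis for `C`, canonical forms `N`, ordering `lt`. -/
def IsRedBasis {n : ℕ} (lt : BWord n → BWord n → Prop)
    (C : Submodule (ZMod 2) (Fin n → ZMod 2)) (N : Set (BWord n))
    (G : Set (BWord n × BWord n)) : Prop :=
  G ⊆ BC lt C N ∧
  (∀ g ∈ BC lt C N, ∃ g' ∈ G, g'.1 ≤ g.1) ∧
  (∀ g ∈ G, ∀ g' ∈ G, g ≠ g' → ¬ g.1 ≤ g'.1)


section Aux
variable {n : ℕ}

lemma permBW_permBW (σ τ : Equiv.Perm (Fin n)) (w : BWord n) :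
    permBW σ (permBW τ w) = permBW (σ * τ) w := by
  simp only [permBW, Multiset.map_map]; rfl

lemma permBW_inv (σ : Equiv.Perm (Fin n)) (w : BWord n) :
    permBW σ⁻¹ (permBW σ w) = w := by
  rw [permBW_permBW]; simp [permBW]

lemma permBW_add (σ : Equiv.Perm (Fin n)) (u v : BWord n) :
    permBW σ (u + v) = permBW σ u + permBW σ v := Multiset.map_add _ _ _

lemma permBW_single (σ : Equiv.Perm (Fin n)) (x : Fin n) :
    permBW σ {x} = {σ x} := rfl

lemma permLin_permLin (σ τ : Equiv.Perm (Fin n)) (y : Fin n → ZMod 2) :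
    permLin σ (permLin τ y) = permLin (σ * τ) y := by
  funext i; simp [permLin]

lemma permLin_inv (σ : Equiv.Perm (Fin n)) (y : Fin n → ZMod 2) :
    permLin σ⁻¹ (permLin σ y) = y := by
  rw [permLin_permLin]; simp only [inv_mul_cancel]; funext i; simp [permLin]

lemma permLin_inv' (σ : Equiv.Perm (Fin n)) (y : Fin n → ZMod 2) :
    permLin σ (permLin σ⁻¹ y) = y := by
  have := permLin_inv σ⁻¹ y; rwa [inv_inv] at this

lemma psi_perm (σ : Equiv.Perm (Fin n)) (w : BWord n) :
    psi (permBW σ w) = permLin σ (psi w) := by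
  funext i
  simp only [psi, permBW, permLin, LinearMap.funLeft_apply]
  congr 1
  have := Multiset.count_map_eq_count' σ w σ.injective (σ⁻¹ i)
  simpa using this

lemma Ind_perm_card (σ : Equiv.Perm (Fin n)) (w : BWord n) :
    (Ind (permBW σ w)).card = (Ind w).card := by
  simp only [Ind, permBW, Multiset.toFinset_map]
  exact Finset.card_image_of_injective _ σ.injective

lemma mem_map_permLin (σ : Equiv.Perm (Fin n))
    (C : Submodule (ZMod 2) (Fin n → ZMod 2)) (x : Fin n → ZMod 2) :
    x ∈ C.map (permLin σ) ↔ permLin σ⁻¹ x ∈ C := by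
  constructor
  · rintro ⟨y, hy, rfl⟩; rwa [permLin_inv]
  · intro h; exact ⟨permLin σ⁻¹ x, h, permLin_inv' σ x⟩

lemma ltE_perm (prec : BWord n → BWord n → Prop) (σ : Equiv.Perm (Fin n))
    (u w : BWord n) :
    ltE (fun a b => prec (permBW σ⁻¹ a) (permBW σ⁻¹ b)) u w ↔
      ltE prec (permBW σ⁻¹ u) (permBW σ⁻¹ w) := by
  unfold ltE
  rw [Ind_perm_card, Ind_perm_card]

lemma permBW_le (σ : Equiv.Perm (Fin n)) {u v : BWord n}
    (h : permBW σ u ≤ permBW σ v) : u ≤ v := by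
  have := Multiset.map_le_map (f := ⇑σ⁻¹) h
  simp only [permBW, Multiset.map_map] at this
  simpa using this

lemma permBW_injective (σ : Equiv.Perm (Fin n)) :
    Function.Injective (permBW σ) := Multiset.map_injective σ.injective

lemma BC_perm (prec : BWord n → BWord n → Prop) (σ : Equiv.Perm (Fin n))
    (C : Submodule (ZMod 2) (Fin n → ZMod 2)) (N : Set (BWord n)) :
    BC (ltE fun u w => prec (permBW σ⁻¹ u) (permBW σ⁻¹ w)) (C.map (permLin σ))
        (permBW σ '' N) =
      (fun g : BWord n × BWord n => (permBW σ g.1, permBW σ g.2)) ''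
        BC (ltE prec) C N := by
  ext g
  constructor
  · rintro ⟨w, ⟨w0, hw0, rfl⟩, w', ⟨w0', hw0', rfl⟩, x, rfl, hne, hmem, hlt⟩
    have key : permBW σ (w0 + {σ⁻¹ x}) = permBW σ w0 + {x} := by
      rw [permBW_add, permBW_single]; simp
    refine ⟨(w0 + {σ⁻¹ x}, w0'), ⟨w0, hw0, w0', hw0', σ⁻¹ x, rfl, ?_, ?_, ?_⟩, ?_⟩
    · intro h
      apply hne
      rw [← key, h]
    · rw [← key, psi_perm, psi_perm, ← map_sub, mem_map_permLin, permLin_inv] at hmem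
      exact hmem
    · rw [← key, ltE_perm, permBW_inv, permBW_inv] at hlt
      exact hlt
    · show (permBW σ (w0 + {σ⁻¹ x}), permBW σ w0') = _
      rw [key]
  · rintro ⟨⟨a, b⟩, ⟨w, hw, w', hw', x, heq, hne, hmem, hlt⟩, rfl⟩
    cases heq
    have key : permBW σ (w + {x}) = permBW σ w + {σ x} := by
      rw [permBW_add, permBW_single]
    refine ⟨permBW σ w, ⟨w, hw, rfl⟩, _, ⟨_, hw', rfl⟩, σ x, by show (permBW σ (w + {x}), permBW σ b) = _; rw [key], ?_, ?_, ?_⟩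

    · rw [← key]
      exact fun h => hne (permBW_injective σ h)
    · rw [← key, psi_perm, psi_perm, ← map_sub]
      exact Submodule.mem_map_of_mem hmem
    · rw [← key, ltE_perm, permBW_inv, permBW_inv]
      exact hlt

end Aux

/-- If `G` is a reduced basis for the binary code `C` w.r.t.
`<_e` built from the admissible ordering `prec` (variables ordered
`x_1 ≺ … ≺ x_n`), and `σ ∈ S_n`, then `σ(G)` is a reduced basis for `σ(C)`
w.r.t. the error-vector ordering built from the transported admissible
ordering (in which `x_{σ(1)} ≺ … ≺ x_{σ(n)}`); in particular the set of
canonical forms for `σ(C)` under this ordering is `σ(N)`. -/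
theorem stmt14 {n : ℕ} (prec : BWord n → BWord n → Prop)
    (htot : IsStrictTotalOrder (BWord n) prec)
    (hmul : ∀ u v w : BWord n, prec u v → prec (u + w) (v + w))
    (hone : ∀ u : BWord n, u ≠ 0 → prec 0 u)
    (C : Submodule (ZMod 2) (Fin n → ZMod 2)) (N : Set (BWord n))
    (G : Set (BWord n × BWord n)) (σ : Equiv.Perm (Fin n))
    (hNrep : ∀ u : BWord n, ∃! w : BWord n, w ∈ N ∧ psi u - psi w ∈ C)
    (hG : IsRedBasis (ltE prec) C N G) :
    IsRedBasis (ltE fun u w => prec (permBW σ⁻¹ u) (permBW σ⁻¹ w))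
        (C.map (permLin σ)) (permBW σ '' N)
        ((fun g : BWord n × BWord n => (permBW σ g.1, permBW σ g.2)) '' G) ∧
    (∀ u : BWord n, ∃! w : BWord n,
      w ∈ permBW σ '' N ∧ psi u - psi w ∈ C.map (permLin σ)) := by
  obtain ⟨hsub, hmin, hred⟩ := hG
  constructor
  · refine ⟨?_, ?_, ?_⟩
    · rw [BC_perm]
      exact Set.image_mono hsub
    · rw [BC_perm]
      rintro g ⟨g0, hg0, rfl⟩
      obtain ⟨g', hg', hle⟩ := hmin g0 hg0
      exact ⟨(permBW σ g'.1, permBW σ g'.2), ⟨g', hg', rfl⟩, Multiset.map_le_map hle⟩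
    · rintro g ⟨a, ha, rfl⟩ g' ⟨b, hb, rfl⟩ hne hle
      refine hred a ha b hb (fun h => hne (by rw [h])) ?_
      exact permBW_le σ hle
  · intro u
    obtain ⟨w0, ⟨hw0N, hw0C⟩, huniq⟩ := hNrep (permBW σ⁻¹ u)
    have hrw : ∀ v : BWord n, permLin σ⁻¹ (psi u - psi (permBW σ v)) =
        psi (permBW σ⁻¹ u) - psi v := by
      intro v
      rw [map_sub, psi_perm σ v, permLin_inv, ← psi_perm]
    refine ⟨permBW σ w0, ⟨⟨w0, hw0N, rfl⟩, ?_⟩, ?_⟩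
    · rw [mem_map_permLin, hrw]
      exact hw0C
    · rintro w ⟨⟨v, hvN, rfl⟩, hmem⟩
      rw [mem_map_permLin, hrw] at hmem
      exact congrArg (permBW σ) (huniq v ⟨hvN, hmem⟩)
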